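/- For Re(s) > 0, 2 Γ(s) L(s) = ∫_0^∞ x^{s-1} / cosh(x) dx, where L(s) = Σ_{n≥0} (-1)^n/(2n+1)^s is the Dirichlet L-function of the nontrivial character mod 4. -/

import Mathlib

open MeasureTheory

open Complex Real Set Filter in
private lemma coshAux_hasSum {t : ℝ} (ht : 0 < t) :
    HasSum (fun n : ℕ ↦ (2 * (-1) ^ n : ℂ) * rexp (-(2 * (n : ℝ) + 1) * t))
      (1 / Complex.cosh t) := by
  have hlt : ‖(-rexp (-(2 * t)))‖ < 1 := by
    rw [norm_neg, Real.norm_eq_abs, abs_of_pos (Real.exp_pos _)]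
    exact Real.exp_lt_one_iff.mpr (by linarith)
  have h := (hasSum_geometric_of_norm_lt_one hlt).mul_left (2 * rexp (-t))
  have hterm : ∀ n : ℕ, 2 * rexp (-t) * (-rexp (-(2 * t))) ^ n
      = 2 * (-1 : ℝ) ^ n * rexp (-(2 * (n : ℝ) + 1) * t) := by
    intro n
    rw [neg_pow, ← Real.exp_nat_mul]
    rw [show 2 * rexp (-t) * ((-1:ℝ) ^ n * rexp (↑n * -(2 * t)))
        = 2 * (-1:ℝ) ^ n * (rexp (-t) * rexp (↑n * -(2 * t))) by ring, ← Real.exp_add]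
    ring_nf
  have hval : 2 * rexp (-t) * (1 - -rexp (-(2 * t)))⁻¹ = 1 / Real.cosh t := by
    rw [sub_neg_eq_add, Real.cosh_eq]
    have h1 : (0:ℝ) < 1 + rexp (-(2 * t)) := by positivity
    have h2 : (0:ℝ) < rexp t + rexp (-t) := by positivity
    field_simp
    rw [mul_add, ← Real.exp_add, ← Real.exp_add, neg_add_cancel, Real.exp_zero]
    ring_nf
  have hR : HasSum (fun n : ℕ ↦ 2 * (-1 : ℝ) ^ n * rexp (-(2 * (n:ℝ) + 1) * t))
      (1 / Real.cosh t) := by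
    rw [← hval]
    exact h.congr_fun fun n => (hterm n).symm
  have hC := Complex.hasSum_ofReal.mpr hR
  convert hC using 2 with n
  · push_cast
    ring
  · push_cast [Complex.ofReal_cosh]
    ring

open Complex Real Set Filter Asymptotics in
private lemma mellin_eq_tsum (s : ℂ) (hs1 : 1 < s.re) :
    2 * Complex.Gamma s * (∑' n : ℕ, (-1) ^ n / ((2 * n + 1 : ℕ) : ℂ) ^ s)
      = mellin (fun x : ℝ => 1 / Complex.cosh x) s := by
  have hs : 0 < s.re := by linarith
  have hp : ∀ n : ℕ, (2 * (-1 : ℂ) ^ n = 0) ∨ (0 < 2 * (n : ℝ) + 1) :=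
    fun n => Or.inr (by positivity)
  have hF : ∀ t ∈ Ioi (0:ℝ), HasSum (fun n : ℕ ↦ (2 * (-1) ^ n : ℂ) *
      rexp (-(2 * (n : ℝ) + 1) * t)) (1 / Complex.cosh t) :=
    fun t ht => coshAux_hasSum ht
  have h0 : Summable (fun n : ℕ => 1 / ((n : ℝ) + 1) ^ s.re) := by
    have h1 := (Real.summable_one_div_nat_rpow.mpr hs1).comp_injective Nat.succ_injective
    refine h1.congr fun n => ?_
    push_cast [Function.comp]
    norm_num
  have h_sum : Summable fun n : ℕ ↦ ‖(2 * (-1 : ℂ) ^ n)‖ / (2 * (n : ℝ) + 1) ^ s.re := by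
    refine Summable.of_nonneg_of_le (fun n => by positivity) (fun n => ?_) (h0.mul_left 2)
    have hnorm : ‖(2 * (-1 : ℂ) ^ n)‖ = 2 := by
      simp [norm_mul, norm_pow]
    rw [hnorm, mul_one_div, div_le_div_iff₀ (by positivity) (by positivity)]
    have hle : ((n:ℝ) + 1) ^ s.re ≤ (2 * (n:ℝ) + 1) ^ s.re :=
      Real.rpow_le_rpow (by positivity) (by linarith [Nat.cast_nonneg (α := ℝ) n]) hs.le
    nlinarith [Real.rpow_pos_of_pos (show (0:ℝ) < (n:ℝ)+1 by positivity) s.re]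
  have H := hasSum_mellin (F := fun x : ℝ => 1 / Complex.cosh x) hp hs hF h_sum
  rw [← H.tsum_eq, ← tsum_mul_left]
  refine tsum_congr fun n => ?_
  push_cast
  ring

theorem two_Gamma_mul_L_integral
    (L : ℂ → ℂ)
    (hsum : ∀ s : ℂ, 1 < s.re →
      L s = ∑' n : ℕ, (-1) ^ n / ((2 * n + 1 : ℕ) : ℂ) ^ s)
    (hanal : Differentiable ℂ L)
    (s : ℂ) (hs : 0 < s.re) :
    2 * Complex.Gamma s * L s =
      ∫ x in Set.Ioi (0 : ℝ), (x : ℂ) ^ (s - 1) / Complex.cosh x := by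
  set f : ℝ → ℂ := fun x => 1 / Complex.cosh x with hf
  set U : Set ℂ := {z | 0 < z.re} with hUdef
  have hUopen : IsOpen U := isOpen_lt continuous_const Complex.continuous_re
  have hVopen : IsOpen {z : ℂ | 1 < z.re} := isOpen_lt continuous_const Complex.continuous_re
  have hcoshne : ∀ x : ℝ, Complex.cosh x ≠ 0 := fun x => by
    rw [← Complex.ofReal_cosh]
    exact_mod_cast (Real.cosh_pos (x := x)).ne'
  have hnorm : ∀ x : ℝ, ‖f x‖ = 1 / Real.cosh x := fun x => by
    rw [hf]
    simp only [one_div, norm_inv, ← Complex.ofReal_cosh, Complex.norm_real, Real.norm_eq_abs]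
    rw [abs_of_pos (Real.cosh_pos x)]
  have hcont : Continuous f := by
    simp only [hf, one_div]
    exact (Complex.continuous_cosh.comp Complex.continuous_ofReal).inv₀ hcoshne
  have hfc : MeasureTheory.LocallyIntegrableOn f (Set.Ioi 0) :=
    hcont.locallyIntegrable.locallyIntegrableOn _
  have hf_top : f =O[Filter.atTop] fun t => Real.exp (-1 * t) := by
    refine Asymptotics.IsBigO.of_bound 2 (Filter.Eventually.of_forall fun t => ?_)
    rw [hnorm t, Real.norm_eq_abs, Real.abs_exp, neg_one_mul, div_le_iff₀ (Real.cosh_pos t),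
      Real.cosh_eq]
    have h1 : Real.exp (-t) * Real.exp t = 1 := by rw [← Real.exp_add]; simp
    nlinarith [Real.exp_pos (-t), Real.exp_pos t]
  have hf_bot : f =O[nhdsWithin 0 (Set.Ioi 0)] fun x : ℝ => x ^ (-(0:ℝ)) := by
    refine Asymptotics.IsBigO.of_bound 1 ?_
    filter_upwards [self_mem_nhdsWithin] with x hx
    rw [hnorm x, neg_zero, Real.rpow_zero]
    simp only [norm_one, one_mul]
    rw [div_le_one (Real.cosh_pos x)]
    exact Real.one_le_cosh x
  have h2 : AnalyticOnNhd ℂ (mellin f) U := by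
    refine DifferentiableOn.analyticOnNhd (fun z hz => ?_) hUopen
    exact (mellin_differentiableAt_of_isBigO_rpow_exp one_pos hfc hf_top hf_bot
      hz).differentiableWithinAt
  have h1 : AnalyticOnNhd ℂ (fun z => 2 * Complex.Gamma z * L z) U := by
    refine DifferentiableOn.analyticOnNhd (fun z hz => ?_) hUopen
    refine (((differentiableAt_const 2).mul (Complex.differentiableAt_Gamma z fun m => ?_)).mul
      (hanal z)).differentiableWithinAt
    intro h
    have : (0:ℝ) < (-(m:ℂ)).re := h ▸ hz
    simp only [Complex.neg_re, Complex.natCast_re] at this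
    have := Nat.cast_nonneg (α := ℝ) m
    linarith
  have hkey : Set.EqOn (fun z => 2 * Complex.Gamma z * L z) (mellin f) {z : ℂ | 1 < z.re} := by
    intro z hz
    simp only
    rw [hsum z hz]
    exact mellin_eq_tsum z hz
  have h2mem : (2:ℂ) ∈ {z : ℂ | 1 < z.re} := by norm_num
  have heq : (fun z => 2 * Complex.Gamma z * L z) =ᶠ[nhds 2] mellin f :=
    Filter.eventuallyEq_of_mem (hVopen.mem_nhds h2mem) hkey
  have hpre : IsPreconnected U := (convex_halfSpace_re_gt 0).isPreconnected
  have h2U : (2:ℂ) ∈ U := by norm_num [hUdef]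
  have hEq := h1.eqOn_of_preconnected_of_eventuallyEq h2 hpre h2U heq
  have hsU : s ∈ U := hs
  have := hEq hsU
  simp only at this
  rw [this, mellin]
  refine MeasureTheory.setIntegral_congr_fun measurableSet_Ioi fun x hx => ?_
  simp [hf, smul_eq_mul, mul_one_div, div_eq_mul_inv]
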